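/- Monotonicity of the guaranteed-capture value in pursuer speed: let d_V and d_V' be two pursuer travel-time functions with d_V'(i,j) ≤ d_V(i,j) for all i,j (a uniformly faster pursuer), both satisfying the triangle inequality and speed advantage. Then the recursively defined values satisfy D'(j | I) ≥ D(j | I) for every node j and every nonempty realizable uncertainty set I, provided the restricted control sets satisfy B(I) ⊆ B'(I). -/
import Mathlib


/-- monotonicity of the value in pursuer speed: `d'` is a uniformly
faster travel-time function (`d' ≤ d`).  `D` and `D'` are defined by the ordered
recursion (base case at singletons; max–min recursion with attained maximizer for `D`
over `B I`, and `D'` at least the value of every control in `B' I`), where the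
red/green updates are nonempty strict subsets (well-foundedness) and `B I ⊆ B' I`.
Then `D'(j|I) ≥ D(j|I)` for every node `j` and every nonempty uncertainty set `I`. -/
theorem stmt_14 {V : Type*} (d d' : V → V → ℝ)
    (hfaster : ∀ i j : V, d' i j ≤ d i j)
    (len : ℕ → ℝ) (g : ℕ → V)
    (red green : Finset ℕ → V → Finset ℕ)
    (hupd : ∀ (I : Finset ℕ) (u : V), 2 ≤ I.card →
      (red I u).Nonempty ∧ red I u ⊂ I ∧ (green I u).Nonempty ∧ green I u ⊂ I)
    (B B' : Finset ℕ → Set V) (hB : ∀ I : Finset ℕ, B I ⊆ B' I)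
    (D D' : V → Finset ℕ → ℝ)
    (hbase : ∀ (j : V) (k : ℕ), D j {k} = len k - d j (g k))
    (hbase' : ∀ (j : V) (k : ℕ), D' j {k} = len k - d' j (g k))
    (hrec : ∀ (j : V) (I : Finset ℕ), 2 ≤ I.card →
      ∃ u ∈ B I, D j I = min (D u (red I u)) (D u (green I u)) - d j u)
    (hrec' : ∀ (j : V) (I : Finset ℕ), 2 ≤ I.card → ∀ u ∈ B' I,
      min (D' u (red I u)) (D' u (green I u)) - d' j u ≤ D' j I) :
    ∀ (j : V) (I : Finset ℕ), I.Nonempty → D j I ≤ D' j I := by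
  have main : ∀ (n : ℕ) (j : V) (I : Finset ℕ), I.Nonempty → I.card = n →
      D j I ≤ D' j I := by
    intro n
    induction n using Nat.strong_induction_on with
    | _ n ih =>
      intro j I hI hn
      rcases Nat.lt_or_ge I.card 2 with h2 | h2
      · obtain ⟨k, rfl⟩ := Finset.card_eq_one.mp (le_antisymm (Nat.lt_succ_iff.mp h2)
          (Finset.one_le_card.mpr hI))
        rw [hbase, hbase']
        linarith [hfaster j (g k)]
      · obtain ⟨u, huB, hDj⟩ := hrec j I h2
        obtain ⟨hrne, hrsub, hgne, hgsub⟩ := hupd I u h2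
        have hr := ih (red I u).card (hn ▸ Finset.card_lt_card hrsub) u (red I u) hrne rfl
        have hg := ih (green I u).card (hn ▸ Finset.card_lt_card hgsub) u (green I u) hgne rfl
        have h' := hrec' j I h2 u (hB I huB)
        have hmin : min (D u (red I u)) (D u (green I u)) ≤
            min (D' u (red I u)) (D' u (green I u)) := le_min
          (le_trans (min_le_left _ _) hr) (le_trans (min_le_right _ _) hg)
        have hd := hfaster j u
        rw [hDj]
        linarith
  exact fun j I hI => main I.card j I hI rfl
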